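/- There exist constants c, C > 0 such that for all ε ∈ (0, 1/2], c · log(1/ε) ≤ ∫₀¹ ∫₀¹ r² / ((t^{1/2} + r)³ (t^{1/2} + r + ε)²) dr dt ≤ C · log(1/ε). -/

import Mathlib

open MeasureTheory intervalIntegral Set Real

noncomputable def fI (ε t r : ℝ) : ℝ :=
  r ^ 2 / ((Real.sqrt t + r) ^ 3 * (Real.sqrt t + r + ε) ^ 2)

noncomputable def Iin (ε t : ℝ) : ℝ := ∫ r in (0:ℝ)..1, fI ε t r

lemma fI_nonneg (ε t : ℝ) {r : ℝ} (hr : 0 ≤ r) : 0 ≤ fI ε t r := by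
  have h1 : 0 ≤ Real.sqrt t + r := by positivity
  exact div_nonneg (by positivity) (mul_nonneg (by positivity) (sq_nonneg _))

lemma fI_intble {ε t : ℝ} (hε : 0 < ε) (ht : 0 < t) {c d : ℝ} (hc : 0 ≤ c) (hd : 0 ≤ d) :
    IntervalIntegrable (fI ε t) volume c d := by
  have hs : 0 < Real.sqrt t := Real.sqrt_pos.mpr ht
  apply ContinuousOn.intervalIntegrable
  have hsub : Set.uIcc c d ⊆ Set.Ici 0 := fun x hx =>
    le_trans (le_min hc hd) (Set.mem_uIcc.mp hx |>.elim (fun h => le_trans (min_le_left _ _) h.1) (fun h => le_trans (min_le_right _ _) h.1))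
  apply ContinuousOn.mono (s := Set.Ici 0) ?_ hsub
  apply ContinuousOn.div (by fun_prop) (by fun_prop)
  intro r hr
  simp only [Set.mem_Ici] at hr
  have h1 : 0 < Real.sqrt t + r := by linarith
  have h2 : 0 < Real.sqrt t + r + ε := by linarith
  positivity

lemma aux_integral_inv_sq {a : ℝ} (ha : 0 < a) :
    ∫ r in (0:ℝ)..1, ((a + r) ^ 2)⁻¹ = a⁻¹ - (a + 1)⁻¹ := by
  have hderiv : ∀ r ∈ Set.uIcc (0:ℝ) 1, HasDerivAt (fun x => -(a + x)⁻¹) (((a + r) ^ 2)⁻¹) r := by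
    intro r hr
    rw [Set.uIcc_of_le zero_le_one] at hr
    have hne : a + r ≠ 0 := by nlinarith [hr.1]
    have h : HasDerivAt (fun x => -(a + x)⁻¹) _ r := (((hasDerivAt_id r).const_add a).inv hne).neg
    simp only [id_eq, Pi.pow_apply] at h
    convert h using 1
    field_simp
  have hcont : IntervalIntegrable (fun r => ((a + r) ^ 2)⁻¹) volume 0 1 := by
    apply ContinuousOn.intervalIntegrable
    apply ContinuousOn.inv₀ (by fun_prop)
    intro r hr
    rw [Set.uIcc_of_le zero_le_one] at hr
    have : 0 < a + r := by nlinarith [hr.1]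
    positivity
  have := integral_eq_sub_of_hasDerivAt hderiv hcont
  rw [this]; ring_nf

lemma Iin_le {ε t : ℝ} (hε : 0 < ε) (ht : 0 < t) :
    Iin ε t ≤ (Real.sqrt t)⁻¹ * (max (Real.sqrt t) ε)⁻¹ := by
  set s := Real.sqrt t with hs_def
  have hs : 0 < s := Real.sqrt_pos.mpr ht
  set a := max s ε with ha_def
  have ha : 0 < a := lt_of_lt_of_le hε (le_max_right _ _)
  have key : ∀ r ∈ Set.Icc (0:ℝ) 1, fI ε t r ≤ s⁻¹ * ((a + r) ^ 2)⁻¹ := by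
    intro r hr
    have hr0 : 0 ≤ r := hr.1
    have h1 : 0 < s + r := by linarith
    have h2 : 0 < s + r + ε := by linarith
    have har : 0 < a + r := by linarith
    have hD : 0 < (s + r) ^ 3 * (s + r + ε) ^ 2 := by positivity
    have heq : s⁻¹ * ((a + r) ^ 2)⁻¹ = 1 / (s * (a + r) ^ 2) := by
      rw [one_div, mul_inv]
    rw [fI, ← hs_def, heq, div_le_div_iff₀ hD (by positivity)]
    have e1 : r ^ 2 ≤ (s + r) ^ 2 := by nlinarith
    have e3 : (a + r) ^ 2 ≤ (s + r + ε) ^ 2 := by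
      have : a ≤ s + ε := max_le (le_add_of_nonneg_right hε.le) (le_add_of_nonneg_left hs.le)
      nlinarith
    have e2 : s ≤ s + r := by linarith
    calc r ^ 2 * (s * (a + r) ^ 2) ≤ (s + r) ^ 2 * ((s + r) * (s + r + ε) ^ 2) := by
          apply mul_le_mul e1 (mul_le_mul e2 e3 (by positivity) h1.le) (by positivity) (by positivity)
      _ = 1 * ((s + r) ^ 3 * (s + r + ε) ^ 2) := by ring
  have h1 : Iin ε t ≤ ∫ r in (0:ℝ)..1, s⁻¹ * ((a + r) ^ 2)⁻¹ := by
    apply integral_mono_on zero_le_one (fI_intble hε ht le_rfl zero_le_one) ?_ key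
    apply IntervalIntegrable.const_mul
    apply ContinuousOn.intervalIntegrable
    apply ContinuousOn.inv₀ (by fun_prop)
    intro r hr
    rw [Set.uIcc_of_le zero_le_one] at hr
    have : 0 < a + r := by nlinarith [hr.1]
    positivity
  calc Iin ε t ≤ ∫ r in (0:ℝ)..1, s⁻¹ * ((a + r) ^ 2)⁻¹ := h1
    _ = s⁻¹ * (a⁻¹ - (a + 1)⁻¹) := by rw [intervalIntegral.integral_const_mul, aux_integral_inv_sq ha]
    _ ≤ s⁻¹ * a⁻¹ := by
        have : (0:ℝ) ≤ (a + 1)⁻¹ := by positivity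
        nlinarith [inv_nonneg.mpr hs.le]

lemma aux_integral_inv_cube {s : ℝ} (hs : 0 < s) (hs1 : s ≤ 1) :
    ∫ r in s..(1:ℝ), (144:ℝ)⁻¹ * (2 * (r ^ 3)⁻¹) = (144:ℝ)⁻¹ * ((s ^ 2)⁻¹ - 1) := by
  have hderiv : ∀ r ∈ Set.uIcc s 1, HasDerivAt (fun x => -((144:ℝ)⁻¹ * (x ^ 2)⁻¹))
      ((144:ℝ)⁻¹ * (2 * (r ^ 3)⁻¹)) r := by
    intro r hr
    rw [Set.uIcc_of_le hs1] at hr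
    have hrpos : 0 < r := lt_of_lt_of_le hs hr.1
    have hne : r ^ 2 ≠ 0 := by positivity
    have h : HasDerivAt (fun x => -((144:ℝ)⁻¹ * (x ^ 2)⁻¹)) _ r := ((((hasDerivAt_id r).pow 2).inv hne).const_mul (144:ℝ)⁻¹).neg
    simp only [id_eq, Pi.pow_apply] at h
    convert h using 1
    field_simp
    ring
  have hcont : IntervalIntegrable (fun r => (144:ℝ)⁻¹ * (2 * (r ^ 3)⁻¹)) volume s 1 := by
    apply ContinuousOn.intervalIntegrable
    apply ContinuousOn.mul (by fun_prop)
    apply ContinuousOn.mul (by fun_prop)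
    apply ContinuousOn.inv₀ (by fun_prop)
    intro r hr
    rw [Set.uIcc_of_le hs1] at hr
    have : 0 < r := lt_of_lt_of_le hs hr.1
    positivity
  rw [integral_eq_sub_of_hasDerivAt hderiv hcont]
  have : (1:ℝ) ^ 2 = 1 := one_pow 2
  rw [this]
  ring

lemma Iin_ge {ε t : ℝ} (hε : 0 < ε) (ht1 : ε ^ 2 ≤ t) (ht2 : t ≤ 1) :
    (144:ℝ)⁻¹ * (t⁻¹ - 1) ≤ Iin ε t := by
  have ht : 0 < t := lt_of_lt_of_le (by positivity) ht1
  set s := Real.sqrt t with hs_def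
  have hs : 0 < s := Real.sqrt_pos.mpr ht
  have hs1 : s ≤ 1 := by rw [hs_def, show (1:ℝ) = Real.sqrt 1 by simp]; exact Real.sqrt_le_sqrt ht2
  have hεs : ε ≤ s := by
    have := Real.sqrt_le_sqrt ht1
    rwa [Real.sqrt_sq hε.le] at this
  have hsplit : Iin ε t = (∫ r in (0:ℝ)..s, fI ε t r) + ∫ r in s..(1:ℝ), fI ε t r :=
    (integral_add_adjacent_intervals (fI_intble hε ht le_rfl hs.le)
      (fI_intble hε ht hs.le zero_le_one)).symm
  have h1 : 0 ≤ ∫ r in (0:ℝ)..s, fI ε t r :=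
    intervalIntegral.integral_nonneg hs.le (fun r hr => fI_nonneg ε t hr.1)
  have key : ∀ r ∈ Set.Icc s 1, (144:ℝ)⁻¹ * (2 * (r ^ 3)⁻¹) ≤ fI ε t r := by
    intro r hr
    have hrs : s ≤ r := hr.1
    have hr0 : 0 < r := lt_of_lt_of_le hs hrs
    have hεr : ε ≤ r := le_trans hεs hrs
    have h1' : 0 < s + r := by linarith
    have h2' : 0 < s + r + ε := by linarith
    have hD : 0 < (s + r) ^ 3 * (s + r + ε) ^ 2 := by positivity
    have heq : (144:ℝ)⁻¹ * (2 * (r ^ 3)⁻¹) = r ^ 2 / (72 * r ^ 5) := by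
      field_simp; ring
    rw [fI, ← hs_def, heq, div_le_div_iff₀ (by positivity) hD]
    have e1 : (s + r) ^ 3 ≤ (2 * r) ^ 3 := pow_le_pow_left₀ (by positivity) (by linarith) 3
    have e2 : (s + r + ε) ^ 2 ≤ (3 * r) ^ 2 := pow_le_pow_left₀ (by positivity) (by linarith) 2
    calc r ^ 2 * ((s + r) ^ 3 * (s + r + ε) ^ 2)
        ≤ r ^ 2 * ((2 * r) ^ 3 * (3 * r) ^ 2) := by
          apply mul_le_mul_of_nonneg_left (mul_le_mul e1 e2 (by positivity) (by positivity))
            (by positivity)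
      _ = r ^ 2 * (72 * r ^ 5) := by ring
  have h2 : ∫ r in s..(1:ℝ), (144:ℝ)⁻¹ * (2 * (r ^ 3)⁻¹) ≤ ∫ r in s..(1:ℝ), fI ε t r := by
    apply integral_mono_on hs1 ?_ (fI_intble hε ht hs.le zero_le_one) key
    apply ContinuousOn.intervalIntegrable
    apply ContinuousOn.mul (by fun_prop)
    apply ContinuousOn.mul (by fun_prop)
    apply ContinuousOn.inv₀ (by fun_prop)
    intro r hr
    rw [Set.uIcc_of_le hs1] at hr
    have : 0 < r := lt_of_lt_of_le hs hr.1
    positivity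
  rw [aux_integral_inv_cube hs hs1] at h2
  have hst : s ^ 2 = t := Real.sq_sqrt ht.le
  rw [hst] at h2
  rw [hsplit]
  linarith

lemma Iin_nonneg (ε t : ℝ) : 0 ≤ Iin ε t :=
  intervalIntegral.integral_nonneg zero_le_one (fun r hr => fI_nonneg ε t hr.1)

lemma sqrt_inv_eq : (fun t : ℝ => (Real.sqrt t)⁻¹) = fun t : ℝ => t ^ (-(1/2) : ℝ) := by
  funext t
  rcases le_or_gt 0 t with ht | ht
  · rw [Real.sqrt_eq_rpow, ← Real.rpow_neg ht]
  · rw [Real.sqrt_eq_zero_of_nonpos ht.le, Real.rpow_def_of_neg ht,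
      show (-(1/2) : ℝ) * π = -(π/2) by ring, Real.cos_neg, Real.cos_pi_div_two, mul_zero,
      inv_zero]

lemma sqrt_inv_intble (b : ℝ) : IntervalIntegrable (fun t : ℝ => (Real.sqrt t)⁻¹) volume 0 b := by
  rw [sqrt_inv_eq]
  exact intervalIntegral.intervalIntegrable_rpow' (by norm_num)

lemma integral_sqrt_inv {b : ℝ} (hb : 0 ≤ b) :
    ∫ t in (0:ℝ)..b, (Real.sqrt t)⁻¹ = 2 * Real.sqrt b := by
  rw [sqrt_inv_eq, integral_rpow (Or.inl (by norm_num))]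
  rw [show (-(1/2) : ℝ) + 1 = 1/2 by norm_num, Real.zero_rpow (by norm_num),
    ← Real.sqrt_eq_rpow]
  ring

lemma Iin_measurable (ε : ℝ) : StronglyMeasurable (Iin ε) := by
  have hF : Measurable (fun p : ℝ × ℝ => fI ε p.1 p.2) := by
    apply Measurable.div (by fun_prop)
    fun_prop
  have h := hF.stronglyMeasurable.integral_prod_right' (ν := volume.restrict (Set.Ioc 0 1))
  have : Iin ε = fun t => ∫ r in Set.Ioc (0:ℝ) 1, fI ε t r := by
    funext t
    exact intervalIntegral.integral_of_le zero_le_one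
  rw [this]
  exact h

lemma Iin_intble {ε : ℝ} (hε : 0 < ε) : IntervalIntegrable (Iin ε) volume 0 1 := by
  rw [intervalIntegrable_iff_integrableOn_Ioc_of_le zero_le_one]
  have hg : IntegrableOn (fun t : ℝ => ε⁻¹ * (Real.sqrt t)⁻¹) (Set.Ioc 0 1) volume := by
    have := ((sqrt_inv_intble 1).const_mul ε⁻¹)
    rwa [intervalIntegrable_iff_integrableOn_Ioc_of_le zero_le_one] at this
  apply MeasureTheory.Integrable.mono hg ((Iin_measurable ε).aestronglyMeasurable.restrict)
  rw [ae_restrict_iff' measurableSet_Ioc]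
  apply Filter.Eventually.of_forall
  intro t ht
  have hs : 0 < Real.sqrt t := Real.sqrt_pos.mpr ht.1
  have h1 : Iin ε t ≤ ε⁻¹ * (Real.sqrt t)⁻¹ := by
    calc Iin ε t ≤ (Real.sqrt t)⁻¹ * (max (Real.sqrt t) ε)⁻¹ := Iin_le hε ht.1
      _ ≤ (Real.sqrt t)⁻¹ * ε⁻¹ := by
          apply mul_le_mul_of_nonneg_left _ (by positivity)
          exact inv_anti₀ hε (le_max_right _ _)
      _ = ε⁻¹ * (Real.sqrt t)⁻¹ := by ring
  rw [Real.norm_of_nonneg (Iin_nonneg ε t), Real.norm_of_nonneg (by positivity)]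
  exact h1


/-- Two-sided logarithmic divergence:
`∫₀¹∫₀¹ r²/((t^{1/2}+r)³(t^{1/2}+r+ε)²) dr dt ≍ log(1/ε)` for `ε ∈ (0,1/2]`. -/
theorem stmt10 :
    ∃ c C : ℝ, 0 < c ∧ 0 < C ∧ ∀ ε : ℝ, 0 < ε → ε ≤ 1 / 2 →
      c * Real.log (1 / ε)
          ≤ (∫ t in (0 : ℝ)..1, ∫ r in (0 : ℝ)..1,
              r ^ 2 / ((Real.sqrt t + r) ^ 3 * (Real.sqrt t + r + ε) ^ 2)) ∧
      (∫ t in (0 : ℝ)..1, ∫ r in (0 : ℝ)..1,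
              r ^ 2 / ((Real.sqrt t + r) ^ 3 * (Real.sqrt t + r + ε) ^ 2))
          ≤ C * Real.log (1 / ε) := by
  refine ⟨1/288, 5, by norm_num, by norm_num, ?_⟩
  intro ε hε hε2
  have hrepr : (∫ t in (0:ℝ)..1, ∫ r in (0:ℝ)..1,
      r ^ 2 / ((Real.sqrt t + r) ^ 3 * (Real.sqrt t + r + ε) ^ 2))
      = ∫ t in (0:ℝ)..1, Iin ε t := rfl
  set L := Real.log (1/ε) with hL_def
  have h2ε : (2:ℝ) ≤ 1/ε := by rw [le_div_iff₀ hε]; linarith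
  have hL : (2:ℝ)/3 < L := by
    have h1 : Real.log 2 ≤ L := Real.log_le_log (by norm_num) h2ε
    nlinarith [Real.log_two_gt_d9]
  have hε2le1 : ε^2 ≤ 1 := by nlinarith
  have hε2pos : 0 < ε^2 := by positivity
  have hI := Iin_intble hε
  have hIa : IntervalIntegrable (Iin ε) volume 0 (ε^2) := hI.mono_set (by
    rw [Set.uIcc_of_le hε2pos.le, Set.uIcc_of_le zero_le_one]
    exact Set.Icc_subset_Icc le_rfl hε2le1)
  have hIb : IntervalIntegrable (Iin ε) volume (ε^2) 1 := hI.mono_set (by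
    rw [Set.uIcc_of_le hε2le1, Set.uIcc_of_le zero_le_one]
    exact Set.Icc_subset_Icc hε2pos.le le_rfl)
  have hsplit : (∫ t in (0:ℝ)..1, Iin ε t)
      = (∫ t in (0:ℝ)..ε^2, Iin ε t) + ∫ t in (ε^2)..(1:ℝ), Iin ε t :=
    (integral_add_adjacent_intervals hIa hIb).symm
  have hinv : IntervalIntegrable (fun t : ℝ => t⁻¹) volume (ε^2) 1 := by
    apply ContinuousOn.intervalIntegrable
    apply ContinuousOn.inv₀ (by fun_prop)
    intro t htm
    rw [Set.uIcc_of_le hε2le1] at htm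
    exact ne_of_gt (lt_of_lt_of_le hε2pos htm.1)
  have hloginv : ∫ t in (ε^2)..(1:ℝ), t⁻¹ = 2 * L := by
    rw [integral_inv (by
      rw [Set.uIcc_of_le hε2le1]
      intro h
      exact absurd h.1 (not_le.mpr hε2pos))]
    rw [hL_def, one_div, one_div, Real.log_inv, Real.log_inv, Real.log_pow]
    push_cast; ring
  constructor
  · -- lower bound
    have hcont : IntervalIntegrable (fun t : ℝ => (144:ℝ)⁻¹ * (t⁻¹ - 1)) volume (ε^2) 1 := by
      apply IntervalIntegrable.const_mul
      exact hinv.sub (intervalIntegrable_const)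
    have hge : ∫ t in (ε^2)..(1:ℝ), (144:ℝ)⁻¹ * (t⁻¹ - 1) ≤ ∫ t in (ε^2)..(1:ℝ), Iin ε t :=
      integral_mono_on hε2le1 hcont hIb (fun t htm => Iin_ge hε htm.1 htm.2)
    have hcomp : ∫ t in (ε^2)..(1:ℝ), (144:ℝ)⁻¹ * (t⁻¹ - 1)
        = (144:ℝ)⁻¹ * (2*L - (1 - ε^2)) := by
      rw [intervalIntegral.integral_const_mul, intervalIntegral.integral_sub hinv intervalIntegrable_const,
        hloginv, intervalIntegral.integral_const]
      simp only [smul_eq_mul, mul_one]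
    have h0le : 0 ≤ ∫ t in (0:ℝ)..ε^2, Iin ε t :=
      intervalIntegral.integral_nonneg hε2pos.le (fun t _ => Iin_nonneg ε t)
    rw [hrepr, hsplit]
    rw [hcomp] at hge
    nlinarith
  · -- upper bound
    have h0ae : ∀ᵐ t : ℝ, t ≠ (0:ℝ) := by
      refine MeasureTheory.ae_iff.mpr ?_
      simp only [ne_eq, not_not]
      rw [show {a : ℝ | a = 0} = {(0:ℝ)} from by ext x; simp]
      exact Real.volume_singleton
    have hU1 : ∫ t in (0:ℝ)..ε^2, Iin ε t ≤ ∫ t in (0:ℝ)..ε^2, ε⁻¹ * (Real.sqrt t)⁻¹ := by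
      apply integral_mono_ae_restrict hε2pos.le hIa ((sqrt_inv_intble (ε^2)).const_mul ε⁻¹)
      rw [Filter.EventuallyLE, ae_restrict_iff' measurableSet_Icc]
      filter_upwards [h0ae] with t ht0 htmem
      have htpos : 0 < t := lt_of_le_of_ne htmem.1 (Ne.symm ht0)
      have hs : 0 < Real.sqrt t := Real.sqrt_pos.mpr htpos
      calc Iin ε t ≤ (Real.sqrt t)⁻¹ * (max (Real.sqrt t) ε)⁻¹ := Iin_le hε htpos
        _ ≤ (Real.sqrt t)⁻¹ * ε⁻¹ := by
            apply mul_le_mul_of_nonneg_left _ (by positivity)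
            exact inv_anti₀ hε (le_max_right _ _)
        _ = ε⁻¹ * (Real.sqrt t)⁻¹ := mul_comm _ _
    have hU1c : ∫ t in (0:ℝ)..ε^2, ε⁻¹ * (Real.sqrt t)⁻¹ = 2 := by
      rw [intervalIntegral.integral_const_mul, integral_sqrt_inv hε2pos.le, Real.sqrt_sq hε.le]
      field_simp
    have hU2 : ∫ t in (ε^2)..(1:ℝ), Iin ε t ≤ ∫ t in (ε^2)..(1:ℝ), t⁻¹ := by
      apply integral_mono_on hε2le1 hIb hinv
      intro t htm
      have htpos : 0 < t := lt_of_lt_of_le hε2pos htm.1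
      have hs : 0 < Real.sqrt t := Real.sqrt_pos.mpr htpos
      calc Iin ε t ≤ (Real.sqrt t)⁻¹ * (max (Real.sqrt t) ε)⁻¹ := Iin_le hε htpos
        _ ≤ (Real.sqrt t)⁻¹ * (Real.sqrt t)⁻¹ := by
            apply mul_le_mul_of_nonneg_left _ (by positivity)
            exact inv_anti₀ hs (le_max_left _ _)
        _ = t⁻¹ := by rw [← mul_inv, Real.mul_self_sqrt htpos.le]
    rw [hrepr, hsplit]
    rw [hU1c] at hU1
    rw [hloginv] at hU2
    linarith
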